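/- arXiv:1603.09092 — 5 statements merged into one kernel-verified Lean document; each statement's English description precedes it below -/
import Mathlib

section
/- For every t≥0 and every y∈ℝ: ∫_{−∞}^{∞} | P_x(U_t>y) − P̂_x(Y_t>y) | dx ≤ |δ|·t. -/
open MeasureTheory Set Filter
open scoped ENNReal NNReal Topology

noncomputable section

namespace RefractedLevy

/-- Parameters of the jump diffusion (2.1)–(2.3): Brownian part `sigma`, drift `mu`,
jump intensities `lamPlus`, `lamMinus`, and the (possibly complex) parameters of the
rational jump densities. -/
structure JumpParams where
  sigma : ℝ
  mu : ℝ
  lamPlus : ℝ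
  lamMinus : ℝ
  mPlus : ℕ
  nMinus : ℕ
  mOrd : Fin mPlus → ℕ
  nOrd : Fin nMinus → ℕ
  eta : Fin mPlus → ℂ
  theta : Fin nMinus → ℂ
  c : (k : Fin mPlus) → Fin (mOrd k) → ℂ
  d : (k : Fin nMinus) → Fin (nOrd k) → ℂ
  sigma_pos : 0 < sigma
  lamPlus_pos : 0 < lamPlus
  lamMinus_pos : 0 < lamMinus
  eta_inj : Function.Injective eta
  theta_inj : Function.Injective theta

/-- The density `p⁺` of the positive jumps, formula (2.2) (index `j` runs over `1,…,m_k`,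
encoded as `j.1 + 1`). -/
def JumpParams.pPlus (p : JumpParams) (z : ℝ) : ℂ :=
  ∑ k, ∑ j, p.c k j * (p.eta k) ^ ((j : ℕ) + 1) * (z : ℂ) ^ (j : ℕ) /
      ((Nat.factorial (j : ℕ) : ℂ)) * Complex.exp (-(p.eta k) * z)

/-- The density `p⁻` of (the absolute value of) the negative jumps, formula (2.3). -/
def JumpParams.pMinus (p : JumpParams) (z : ℝ) : ℂ :=
  ∑ k, ∑ j, p.d k j * (p.theta k) ^ ((j : ℕ) + 1) * (z : ℂ) ^ (j : ℕ) /
      ((Nat.factorial (j : ℕ) : ℂ)) * Complex.exp (-(p.theta k) * z)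

/-- `p⁺` and `p⁻` are genuine probability densities on `(0,∞)`. -/
structure JumpParams.IsDensity (p : JumpParams) : Prop where
  pPlus_real : ∀ z : ℝ, 0 < z → (p.pPlus z).im = 0
  pPlus_nonneg : ∀ z : ℝ, 0 < z → 0 ≤ (p.pPlus z).re
  pPlus_int : ∫ z in Ioi (0:ℝ), (p.pPlus z).re = 1
  pMinus_real : ∀ z : ℝ, 0 < z → (p.pMinus z).im = 0
  pMinus_nonneg : ∀ z : ℝ, 0 < z → 0 ≤ (p.pMinus z).re
  pMinus_int : ∫ z in Ioi (0:ℝ), (p.pMinus z).re = 1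

/-- The characteristic exponent ψ of (2.5), as a function of a complex variable. -/
def JumpParams.psi (p : JumpParams) (z : ℂ) : ℂ :=
  -(p.sigma ^ 2 / 2 : ℝ) * z ^ 2 + Complex.I * z * (p.mu : ℝ)
    + (p.lamPlus : ℝ) *
        ((∑ k, ∑ j, p.c k j * (p.eta k / (p.eta k - Complex.I * z)) ^ ((j : ℕ) + 1)) - 1)
    + (p.lamMinus : ℝ) *
        ((∑ k, ∑ j, p.d k j * (p.theta k / (p.theta k + Complex.I * z)) ^ ((j : ℕ) + 1)) - 1)

/-- ψ̂(z) = ψ(z) − iδz, the characteristic exponent of `Y_t = X_t − δ t`. -/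
def JumpParams.psiHat (p : JumpParams) (δ : ℝ) (z : ℂ) : ℂ :=
  p.psi z - Complex.I * (δ : ℝ) * z

/-- `z` is not a pole of ψ. -/
def JumpParams.Regular (p : JumpParams) (z : ℂ) : Prop :=
  (∀ k, p.eta k - Complex.I * z ≠ 0) ∧ (∀ k, p.theta k + Complex.I * z ≠ 0)

/-- `q ∈ 𝕊`: all (non-pole) roots of `ψ(z) = q` and of `ψ̂(z) = q` are simple. -/
def JumpParams.SimpleRoots (p : JumpParams) (δ q : ℝ) : Prop :=
  (∀ z : ℂ, p.Regular z → p.psi z = q → deriv p.psi z ≠ 0) ∧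
  (∀ z : ℂ, p.Regular z → p.psiHat δ z = q → deriv (p.psiHat δ) z ≠ 0)

variable {Ω : Type*} [MeasurableSpace Ω]

/-- `(P x)_{x ∈ ℝ}` is the family of laws of a càdlàg process `X` with stationary
independent increments, started at `x` under `P x`, with characteristic exponent `p.psi`. -/
structure IsLevyFamily (P : ℝ → Measure Ω) (X : ℝ → Ω → ℝ) (p : JumpParams) : Prop where
  prob : ∀ x, IsProbabilityMeasure (P x)
  meas : ∀ t, Measurable (X t)
  start : ∀ x, (P x) {ω | X 0 ω = x} = 1
  cadlag : ∀ x, ∀ᵐ ω ∂(P x),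
      (∀ t : ℝ, 0 ≤ t → ContinuousWithinAt (fun s => X s ω) (Ici t) t) ∧
      (∀ t : ℝ, 0 < t → ∃ l : ℝ, Tendsto (fun s => X s ω) (𝓝[<] t) (𝓝 l))
  stationary : ∀ (x s t : ℝ), 0 ≤ s → 0 ≤ t →
      Measure.map (fun ω => X (s + t) ω - X s ω) (P x)
        = Measure.map (fun ω => X t ω - X 0 ω) (P 0)
  indep : ∀ (x : ℝ) (n : ℕ) (ts : Fin (n + 1) → ℝ), (∀ i, 0 ≤ ts i) → Monotone ts →
      ProbabilityTheory.iIndepFun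
        (fun (i : Fin n) ω => X (ts i.succ) ω - X (ts i.castSucc) ω) (P x)
  charExp : ∀ z : ℝ,
      ∫ ω, Complex.exp (Complex.I * (z : ℂ) * (X 1 ω : ℂ)) ∂(P 0) = Complex.exp (p.psi z)

/-- `U` solves the refraction equation (1.1) along the sample path `ω`. -/
def RefractionEq (X U : ℝ → Ω → ℝ) (δ b : ℝ) (ω : Ω) : Prop :=
  ∀ t : ℝ, 0 ≤ t →
    U t ω = X t ω - δ * ∫ s in Ioc (0:ℝ) t, (if b < U s ω then (1:ℝ) else 0)

/-- `U` is the (strong) solution of the refraction equation driven by `X`. -/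
structure IsRefracted (P : ℝ → Measure Ω) (X U : ℝ → Ω → ℝ) (δ b : ℝ) : Prop where
  meas : ∀ t, Measurable (U t)
  sol : ∀ x, ∀ᵐ ω ∂(P x), RefractionEq X U δ b ω

/-- the drifted process `Y_t = X_t − δ t`. -/
def drifted (X : ℝ → Ω → ℝ) (δ : ℝ) (t : ℝ) (ω : Ω) : ℝ := X t ω - δ * t

/-- running supremum `Z̄_t = sup_{0 ≤ s ≤ t} Z_s`. -/
def runSup (Z : ℝ → Ω → ℝ) (t : ℝ) (ω : Ω) : ℝ := sSup ((fun s => Z s ω) '' Icc 0 t)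

/-- running infimum `Z̲_t = inf_{0 ≤ s ≤ t} Z_s`. -/
def runInf (Z : ℝ → Ω → ℝ) (t : ℝ) (ω : Ω) : ℝ := sInf ((fun s => Z s ω) '' Icc 0 t)

/-- `P(Z_{e(q)} > y) = ∫₀^∞ q e^{−qt} P(Z_t > y) dt`. -/
def probGt (q : ℝ) (P : Measure Ω) (Z : ℝ → Ω → ℝ) (y : ℝ) : ℝ :=
  ∫ t in Ioi (0:ℝ), q * Real.exp (-q * t) * ((P {ω | y < Z t ω}).toReal)

/-- `P(Z_{e(q)} < y)`. -/
def probLt (q : ℝ) (P : Measure Ω) (Z : ℝ → Ω → ℝ) (y : ℝ) : ℝ :=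
  ∫ t in Ioi (0:ℝ), q * Real.exp (-q * t) * ((P {ω | Z t ω < y}).toReal)

/-- `P(Z_{e(q)} ≤ y)`. -/
def probLe (q : ℝ) (P : Measure Ω) (Z : ℝ → Ω → ℝ) (y : ℝ) : ℝ :=
  ∫ t in Ioi (0:ℝ), q * Real.exp (-q * t) * ((P {ω | Z t ω ≤ y}).toReal)

/-- `E[e^{s Z_{e(q)}}]` for real `s`. -/
def lapMix (q : ℝ) (P : Measure Ω) (Z : ℝ → Ω → ℝ) (s : ℝ) : ℝ :=
  ∫ t in Ioi (0:ℝ), q * Real.exp (-q * t) * ∫ ω, Real.exp (s * Z t ω) ∂P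

/-- `E[e^{φ Z_{e(q)}}]` for complex `φ`. -/
def lapMixC (q : ℝ) (P : Measure Ω) (Z : ℝ → Ω → ℝ) (φ : ℂ) : ℂ :=
  ∫ t in Ioi (0:ℝ), ((q * Real.exp (-q * t) : ℝ) : ℂ) * ∫ ω, Complex.exp (φ * (Z t ω : ℂ)) ∂P

/-- the law of `Z_{e(q)}` under `P`: the `Exp(q)`-mixture of the laws of `Z_t`. -/
def expLaw (q : ℝ) (P : Measure Ω) (Z : ℝ → Ω → ℝ) : Measure ℝ :=
  (((volume : Measure ℝ).restrict (Ioi 0)).withDensity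
      fun t => ENNReal.ofReal (q * Real.exp (-q * t))).bind fun t => Measure.map (Z t) P

/-- the convolution of two laws on ℝ. -/
def convLaw (μ ν : Measure ℝ) : Measure ℝ :=
  Measure.map (fun z : ℝ × ℝ => z.1 + z.2) (μ.prod ν)

/-- the measure whose distribution function is `K_q`: the convolution of the law of
`Y̲_{e(q)}` under `P̂` with the law of `X̄_{e(q)}` under `P` (both started at 0). -/
def Kmeas (q : ℝ) (P : Measure Ω) (X : ℝ → Ω → ℝ) (δ : ℝ) : Measure ℝ :=
  convLaw (expLaw q P (runInf (drifted X δ))) (expLaw q P (runSup X))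

/-- the distribution function `K_q`. -/
def Kq (q : ℝ) (P : Measure Ω) (X : ℝ → Ω → ℝ) (δ : ℝ) (x : ℝ) : ℝ :=
  (Kmeas q P X δ (Iic x)).toReal

/-- `F₁` is the continuous, continuously differentiable, bounded function on `(0,∞)`
with Laplace transform (2.10). -/
def IsF1 (q : ℝ) (P : Measure Ω) (X : ℝ → Ω → ℝ) (δ : ℝ) (F : ℝ → ℝ) : Prop :=
  ContinuousOn F (Ioi 0) ∧ (∀ x ∈ Ioi (0:ℝ), DifferentiableAt ℝ F x) ∧
    ContinuousOn (deriv F) (Ioi 0) ∧ (∃ C, ∀ x ∈ Ioi (0:ℝ), |F x| ≤ C) ∧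
    ∀ s : ℝ, 0 < s →
      ∫ x in Ioi (0:ℝ), Real.exp (-s * x) * F x
        = (1 / s) * (lapMix q P (runSup (drifted X δ)) (-s) / lapMix q P (runSup X) (-s) - 1)

/-- `F₂` is the continuous, continuously differentiable function on `(−∞,0)`
with Laplace transform (4.9). -/
def IsF2 (q : ℝ) (P : Measure Ω) (X : ℝ → Ω → ℝ) (δ : ℝ) (F : ℝ → ℝ) : Prop :=
  ContinuousOn F (Iio 0) ∧ (∀ x ∈ Iio (0:ℝ), DifferentiableAt ℝ F x) ∧
    ContinuousOn (deriv F) (Iio 0) ∧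
    ∀ s : ℝ, 0 < s →
      ∫ z in Iio (0:ℝ), Real.exp (s * z) * F z
        = (1 / s) * (lapMix q P (runInf X) s / lapMix q P (runInf (drifted X δ)) s - 1)


/-- Translation lemma: the total mass, over all starting points, of the probability
that the drifted process at time `t` lies in a window `(a, b]` is at most `b - a`. -/
lemma window_bound {Ω : Type*} [MeasurableSpace Ω] (P : ℝ → Measure Ω) (X : ℝ → Ω → ℝ)
    (p : JumpParams) (hX : IsLevyFamily P X p) (t : ℝ) (ht : 0 ≤ t) (δ a b : ℝ) (hab : a ≤ b) :
    ∫⁻ x : ℝ, (P x) {ω | a < X t ω - δ * t ∧ X t ω - δ * t ≤ b}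
      ≤ ENNReal.ofReal (b - a) := by
  have hprob := hX.prob
  set W : Ω → ℝ := fun ω => X t ω - X 0 ω with hWdef
  have hW : Measurable W := (hX.meas t).sub (hX.meas 0)
  haveI := hprob 0
  set ν : Measure ℝ := Measure.map W (P 0) with hνdef
  haveI : IsProbabilityMeasure ν := Measure.isProbabilityMeasure_map hW.aemeasurable
  have hmap : ∀ x, Measure.map W (P x) = ν := by
    intro x
    have h := hX.stationary x 0 t le_rfl ht
    simpa [zero_add] using h
  set c : ℝ := a + δ * t with hc
  set d : ℝ := b + δ * t with hd
  have key : ∀ x : ℝ, (P x) {ω | a < X t ω - δ * t ∧ X t ω - δ * t ≤ b}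
      = ν (Ioc (c - x) (d - x)) := by
    intro x
    haveI := hprob x
    have hmeas0 : MeasurableSet {ω | X 0 ω = x} := (hX.meas 0) (measurableSet_singleton x)
    have hcompl : (P x) {ω | X 0 ω = x}ᶜ = 0 := by
      rw [measure_compl hmeas0 (measure_ne_top _ _), hX.start x, measure_univ, tsub_self]
    have hae : ∀ᵐ ω ∂(P x), X 0 ω = x := by
      rw [ae_iff]
      exact hcompl
    have hcong : (P x) {ω | a < X t ω - δ * t ∧ X t ω - δ * t ≤ b}
        = (P x) (W ⁻¹' Ioc (c - x) (d - x)) := by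
      apply measure_congr
      rw [Filter.eventuallyEq_set]
      filter_upwards [hae] with ω h0
      simp only [mem_setOf_eq, mem_preimage, mem_Ioc, hWdef, h0, hc, hd]
      constructor
      · rintro ⟨h1, h2⟩; exact ⟨by linarith, by linarith⟩
      · rintro ⟨h1, h2⟩; exact ⟨by linarith, by linarith⟩
    rw [hcong, ← Measure.map_apply hW measurableSet_Ioc, hmap x]
  have step1 : ∀ x : ℝ, ν (Ioc (c - x) (d - x))
      = ∫⁻ w, (Ioc c d).indicator (1 : ℝ → ℝ≥0∞) (x + w) ∂ν := by
    intro x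
    rw [← lintegral_indicator_one (measurableSet_Ioc (a := c - x) (b := d - x))]
    apply lintegral_congr; intro w
    have hiff : w ∈ Ioc (c - x) (d - x) ↔ x + w ∈ Ioc c d := by
      simp only [mem_Ioc]
      constructor
      · rintro ⟨h1, h2⟩; exact ⟨by linarith, by linarith⟩
      · rintro ⟨h1, h2⟩; exact ⟨by linarith, by linarith⟩
    by_cases h : w ∈ Ioc (c - x) (d - x)
    · rw [Set.indicator_of_mem h, Set.indicator_of_mem (hiff.1 h)]; rfl
    · rw [Set.indicator_of_notMem h, Set.indicator_of_notMem (fun hh => h (hiff.2 hh))]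
  calc ∫⁻ x : ℝ, (P x) {ω | a < X t ω - δ * t ∧ X t ω - δ * t ≤ b}
      = ∫⁻ x : ℝ, ∫⁻ w, (Ioc c d).indicator (1 : ℝ → ℝ≥0∞) (x + w) ∂ν := by
        refine lintegral_congr fun x => ?_
        rw [key x, step1 x]
    _ = ∫⁻ w, ∫⁻ x : ℝ, (Ioc c d).indicator (1 : ℝ → ℝ≥0∞) (x + w) ∂(volume) ∂ν := by
        refine lintegral_lintegral_swap ?_
        have : Measurable fun q : ℝ × ℝ => (Ioc c d).indicator (1 : ℝ → ℝ≥0∞) (q.1 + q.2) :=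
          (measurable_const.indicator measurableSet_Ioc).comp measurable_add
        exact this.aemeasurable
    _ = ∫⁻ _ : ℝ, ENNReal.ofReal (b - a) ∂ν := by
        refine lintegral_congr fun w => ?_
        rw [lintegral_add_right_eq_self ((Ioc c d).indicator (1 : ℝ → ℝ≥0∞)) w,
          lintegral_indicator_one measurableSet_Ioc, Real.volume_Ioc]
        congr 1
        simp [hc, hd]
    _ = ENNReal.ofReal (b - a) := by
        rw [lintegral_const, measure_univ, mul_one]
    _ ≤ ENNReal.ofReal (b - a) := le_rfl

/-- Lemma 3.1, (3.10): for every `t ≥ 0` and `y ∈ ℝ`,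
`∫ |P_x(U_t > y) − P̂_x(Y_t > y)| dx ≤ |δ| t`. -/
theorem statement_7
    {Ω : Type*} [MeasurableSpace Ω] (P : ℝ → Measure Ω) (X U : ℝ → Ω → ℝ)
    (p : JumpParams) (δ b : ℝ)
    (hX : IsLevyFamily P X p) (hp : p.IsDensity)
    (hU : IsRefracted P X U δ b)
    (t : ℝ) (ht : 0 ≤ t) (y : ℝ) :
    ∫⁻ x : ℝ, ENNReal.ofReal
        |((P x) {ω | y < U t ω}).toReal - ((P x) {ω | y < drifted X δ t ω}).toReal|
      ≤ ENNReal.ofReal (|δ| * t) := by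
  set m : ℝ := min y (y - δ * t) with hm
  set M : ℝ := max y (y - δ * t) with hM
  have hmM : m ≤ M := min_le_max
  have hMm : M - m = |δ| * t := by
    rw [hM, hm, max_sub_min_eq_abs]
    have : y - δ * t - y = -(δ * t) := by ring
    rw [this, abs_neg, abs_mul, abs_of_nonneg ht]
  -- pointwise estimate
  have hpt : ∀ x : ℝ, ENNReal.ofReal
      |((P x) {ω | y < U t ω}).toReal - ((P x) {ω | y < drifted X δ t ω}).toReal|
      ≤ (P x) {ω | m < X t ω - δ * t ∧ X t ω - δ * t ≤ M} := by
    intro x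
    haveI := hX.prob x
    set A : Set Ω := {ω | y < U t ω} with hA
    set B : Set Ω := {ω | y < drifted X δ t ω} with hB
    set S : Set Ω := {ω | m < X t ω - δ * t ∧ X t ω - δ * t ≤ M} with hSdef
    -- pathwise sandwich: on the a.e. set where the refraction equation holds
    have hpath : ∀ᵐ ω ∂(P x), (ω ∈ A → ω ∈ B ∪ S) ∧ (ω ∈ B → ω ∈ A ∪ S) := by
      filter_upwards [hU.sol x] with ω hω
      have heq := hω t ht
      set I : ℝ := ∫ s in Ioc (0:ℝ) t, (if b < U s ω then (1:ℝ) else 0) with hI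
      have hI0 : 0 ≤ I := by
        apply integral_nonneg
        intro s
        by_cases h : b < U s ω <;> simp [h]
      have hI1 : I ≤ t := by
        have h1 : I ≤ ∫ _ in Ioc (0:ℝ) t, (1:ℝ) := by
          refine integral_mono_of_nonneg (Filter.Eventually.of_forall fun s => ?_)
            (integrableOn_const ?_) (Filter.Eventually.of_forall fun s => ?_)
          · by_cases h : b < U s ω <;> simp [h]
          · rw [Real.volume_Ioc]; exact ENNReal.ofReal_ne_top
          · by_cases h : b < U s ω <;> simp [h]
        have h2 : ∫ _ in Ioc (0:ℝ) t, (1:ℝ) = t := by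
          rw [setIntegral_const, smul_eq_mul, mul_one, Real.volume_real_Ioc]
          simp [ht]
        linarith [h1, h2.symm ▸ h1]
      have hYU : X t ω - δ * t = U t ω - δ * (t - I) := by rw [heq]; ring
      have hmy : m ≤ y := min_le_left _ _
      have hmd : m ≤ y - δ * t := min_le_right _ _
      have hyM : y ≤ M := le_max_left _ _
      have hdM : y - δ * t ≤ M := le_max_right _ _
      constructor
      · intro hAω
        by_cases hBω : ω ∈ B
        · exact Or.inl hBω
        · refine Or.inr ?_
          simp only [hB, hA, drifted, mem_setOf_eq, not_lt] at hAω hBω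
          refine ⟨?_, le_trans hBω hyM⟩
          rcases le_or_gt 0 δ with hδ | hδ
          · nlinarith [mul_le_mul_of_nonneg_left (sub_le_self t hI0) hδ]
          · nlinarith [mul_nonneg (neg_nonneg.2 hδ.le) (sub_nonneg.2 hI1)]
      · intro hBω
        by_cases hAω : ω ∈ A
        · exact Or.inl hAω
        · refine Or.inr ?_
          simp only [hB, hA, drifted, mem_setOf_eq, not_lt] at hBω hAω
          refine ⟨lt_of_le_of_lt hmy hBω, ?_⟩
          rcases le_or_gt 0 δ with hδ | hδ
          · nlinarith [mul_nonneg hδ (sub_nonneg.2 hI1)]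
          · nlinarith [mul_le_mul_of_nonpos_left (sub_le_self t hI0) hδ.le]
    have hAB : (P x) A ≤ (P x) B + (P x) S := by
      refine le_trans (measure_mono_ae ?_) (measure_union_le B S)
      filter_upwards [hpath] with ω hω
      exact hω.1
    have hBA : (P x) B ≤ (P x) A + (P x) S := by
      refine le_trans (measure_mono_ae ?_) (measure_union_le A S)
      filter_upwards [hpath] with ω hω
      exact hω.2
    have hAfin : (P x) A ≠ ⊤ := measure_ne_top _ _
    have hBfin : (P x) B ≠ ⊤ := measure_ne_top _ _
    have hSfin : (P x) S ≠ ⊤ := measure_ne_top _ _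
    have habs : |((P x) A).toReal - ((P x) B).toReal| ≤ ((P x) S).toReal := by
      rw [abs_sub_le_iff]
      constructor
      · have := ENNReal.toReal_mono (by finiteness) hAB
        rw [ENNReal.toReal_add hBfin hSfin] at this
        linarith
      · have := ENNReal.toReal_mono (by finiteness) hBA
        rw [ENNReal.toReal_add hAfin hSfin] at this
        linarith
    calc ENNReal.ofReal |((P x) A).toReal - ((P x) B).toReal|
        ≤ ENNReal.ofReal (((P x) S).toReal) := ENNReal.ofReal_le_ofReal habs
      _ = (P x) S := ENNReal.ofReal_toReal hSfin
  calc ∫⁻ x : ℝ, ENNReal.ofReal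
        |((P x) {ω | y < U t ω}).toReal - ((P x) {ω | y < drifted X δ t ω}).toReal|
      ≤ ∫⁻ x : ℝ, (P x) {ω | m < X t ω - δ * t ∧ X t ω - δ * t ≤ M} :=
        lintegral_mono fun x => hpt x
    _ ≤ ENNReal.ofReal (M - m) := window_bound P X p hX t ht δ m M hmM
    _ = ENNReal.ofReal (|δ| * t) := by rw [hMm]

end RefractedLevy
end
end

section
/- For every t≥0 and every y∈ℝ: ∫_{−∞}^{∞} | P_x(X̄_t>y) − P̂_x(Ȳ_t>y) | dx ≤ |δ|·t, where X̄_t=sup_{0≤s≤t}X_s and Ȳ_t=sup_{0≤s≤t}Y_s. -/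
open MeasureTheory Set Filter
open scoped ENNReal NNReal Topology

noncomputable section

namespace RefractedLevy

variable {Ω : Type*} [MeasurableSpace Ω]

/-- enumeration of a countable dense subset of `[0,t]` containing `t` (and `0` if `0 ≤ t`). -/
def seq (t : ℝ) : ℕ → ℝ
  | 0 => t
  | n+1 => min t (max 0 (((Denumerable.eqv ℚ).symm n : ℚ) : ℝ))

lemma seq_zero (t : ℝ) : seq t 0 = t := rfl

lemma seq_mem {t : ℝ} (ht : 0 ≤ t) (n : ℕ) : seq t n ∈ Icc 0 t := by
  cases n with
  | zero => exact ⟨ht, le_rfl⟩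
  | succ m => exact ⟨le_min ht (le_max_left _ _), min_le_left _ _⟩

lemma exists_seq_mem_Ioo {t a b : ℝ} (h0 : 0 ≤ a) (hab : a < b) (hat : a < t) :
    ∃ n, seq t n ∈ Ioo a b ∧ seq t n ≤ t := by
  have h : a < min b t := lt_min hab hat
  obtain ⟨q, hq1, hq2⟩ := exists_rat_btwn h
  refine ⟨Denumerable.eqv ℚ q + 1, ?_, ?_⟩
  · have hq0 : (0:ℝ) ≤ (q:ℝ) := le_of_lt (lt_of_le_of_lt h0 hq1)
    have hqt : (q:ℝ) ≤ t := le_of_lt (lt_of_lt_of_le hq2 (min_le_right _ _))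
    have : seq t (Denumerable.eqv ℚ q + 1) = (q:ℝ) := by
      show min t (max 0 (((Denumerable.eqv ℚ).symm (Denumerable.eqv ℚ q) : ℚ) : ℝ)) = (q:ℝ)
      rw [Equiv.symm_apply_apply, max_eq_right hq0, min_eq_right hqt]
    rw [this]
    exact ⟨hq1, lt_of_lt_of_le hq2 (min_le_left _ _)⟩
  · exact (seq_mem (le_of_lt (lt_of_le_of_lt h0 hat)) _).2

/-- a càdlàg function is bounded above on `[0,t]`. -/
lemma bddAbove_of_cadlag {f : ℝ → ℝ} {t : ℝ} (ht : 0 ≤ t)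
    (hR : ∀ s, 0 ≤ s → ContinuousWithinAt f (Ici s) s)
    (hL : ∀ s, 0 < s → ∃ l, Tendsto f (𝓝[<] s) (𝓝 l)) :
    BddAbove (f '' Icc 0 t) := by
  have hloc : ∀ s ∈ Icc (0:ℝ) t, ∃ U : Set ℝ, U ∈ 𝓝 s ∧ BddAbove (f '' (U ∩ Icc 0 t)) := by
    intro s hs
    have hRs := hR s hs.1
    have hev : {r | f r < f s + 1} ∈ 𝓝[≥] s :=
      hRs.eventually_lt_const (lt_add_one (f s))
    obtain ⟨b, hb, hIb⟩ := (mem_nhdsGE_iff_exists_Ico_subset).1 hev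
    rcases eq_or_lt_of_le hs.1 with h0 | h0
    · refine ⟨Iio b, Iio_mem_nhds hb, ⟨f s + 1, ?_⟩⟩
      rintro z ⟨r, ⟨hr1, hr2⟩, rfl⟩
      have : r ∈ Ico s b := ⟨h0 ▸ hr2.1, hr1⟩
      exact le_of_lt (hIb this)
    · obtain ⟨l, hl⟩ := hL s h0
      have hev2 : {r | f r < l + 1} ∈ 𝓝[<] s :=
        hl.eventually_lt_const (lt_add_one l)
      obtain ⟨a, ha, hIa⟩ := (mem_nhdsLT_iff_exists_Ioo_subset' (sub_one_lt s)).1 hev2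
      refine ⟨Ioo a b, Ioo_mem_nhds ha hb, ⟨max (l + 1) (f s + 1), ?_⟩⟩
      rintro z ⟨r, ⟨⟨hr1, hr2⟩, _⟩, rfl⟩
      rcases lt_or_ge r s with hrs | hrs
      · exact le_trans (le_of_lt (hIa ⟨hr1, hrs⟩)) (le_max_left _ _)
      · exact le_trans (le_of_lt (hIb ⟨hrs, hr2⟩)) (le_max_right _ _)
  classical
  choose! U hU hUb using hloc
  obtain ⟨fs, hfs, hcov⟩ := (isCompact_Icc (a := (0:ℝ)) (b := t)).elim_nhds_subcover U
    (fun s hs => hU s hs)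
  have himg : f '' Icc 0 t ⊆ ⋃ s ∈ fs, f '' (U s ∩ Icc 0 t) := by
    rintro z ⟨r, hr, rfl⟩
    obtain ⟨s, hsfs, hrU⟩ := by simpa using hcov hr
    exact mem_biUnion hsfs ⟨r, ⟨hrU, hr⟩, rfl⟩
  refine BddAbove.mono himg ?_
  refine (Set.Finite.bddAbove_biUnion fs.finite_toSet).2 ?_
  intro s hsfs
  exact hUb s (hfs s hsfs)

/-- for bounded right-continuous paths the running sup exceeds `r` iff some `seq` value does. -/
lemma lt_sSup_iff_seq {f : ℝ → ℝ} {t r : ℝ} (ht : 0 ≤ t)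
    (hR : ∀ s, 0 ≤ s → ContinuousWithinAt f (Ici s) s)
    (hbdd : BddAbove (f '' Icc 0 t)) :
    r < sSup (f '' Icc 0 t) ↔ ∃ n, r < f (seq t n) := by
  constructor
  · intro hr
    obtain ⟨z, ⟨s, hs, rfl⟩, hz⟩ := exists_lt_of_lt_csSup (by simp [ht] : (f '' Icc 0 t).Nonempty) hr
    rcases eq_or_lt_of_le hs.2 with hst | hst
    · exact ⟨0, by rwa [seq_zero, ← hst]⟩
    · have hev : {u | r < f u} ∈ 𝓝[≥] s := (hR s hs.1).eventually_const_lt hz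
      obtain ⟨b, hb, hIb⟩ := (mem_nhdsGE_iff_exists_Ico_subset).1 hev
      obtain ⟨n, hn, _⟩ := exists_seq_mem_Ioo hs.1 hb hst
      exact ⟨n, hIb ⟨le_of_lt hn.1, hn.2⟩⟩
  · rintro ⟨n, hn⟩
    exact lt_of_lt_of_le hn (le_csSup hbdd ⟨seq t n, seq_mem ht n, rfl⟩)

/-- pointwise comparison of the running suprema of `f` and its drift-adjusted version. -/
lemma sSup_drift_compare {f : ℝ → ℝ} {δ t : ℝ} (ht : 0 ≤ t) :
    sSup (f '' Icc 0 t) - max δ 0 * t ≤ sSup ((fun s => f s - δ * s) '' Icc 0 t) ∧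
      sSup ((fun s => f s - δ * s) '' Icc 0 t) ≤ sSup (f '' Icc 0 t) + max (-δ) 0 * t := by
  have hcp : 0 ≤ max δ 0 * t := mul_nonneg (le_max_right _ _) ht
  have hcm : 0 ≤ max (-δ) 0 * t := mul_nonneg (le_max_right _ _) ht
  have hne : (Icc (0:ℝ) t).Nonempty := ⟨0, le_rfl, ht⟩
  have key1 : ∀ s ∈ Icc (0:ℝ) t, f s - δ * s ≤ f s + max (-δ) 0 * t := by
    intro s hs
    have : -(δ * s) ≤ max (-δ) 0 * t := by
      calc -(δ * s) = -δ * s := by ring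
      _ ≤ max (-δ) 0 * s := mul_le_mul_of_nonneg_right (le_max_left _ _) hs.1
      _ ≤ max (-δ) 0 * t := mul_le_mul_of_nonneg_left hs.2 (le_max_right _ _)
    linarith
  have key2 : ∀ s ∈ Icc (0:ℝ) t, f s ≤ (f s - δ * s) + max δ 0 * t := by
    intro s hs
    have : δ * s ≤ max δ 0 * t := by
      calc δ * s ≤ max δ 0 * s := mul_le_mul_of_nonneg_right (le_max_left _ _) hs.1
      _ ≤ max δ 0 * t := mul_le_mul_of_nonneg_left hs.2 (le_max_right _ _)
    linarith
  by_cases hA : BddAbove (f '' Icc 0 t)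
  · have hB : BddAbove ((fun s => f s - δ * s) '' Icc 0 t) := by
      obtain ⟨M, hM⟩ := hA
      refine ⟨M + max (-δ) 0 * t, ?_⟩
      rintro z ⟨s, hs, rfl⟩
      exact le_trans (key1 s hs) (add_le_add_left (hM ⟨s, hs, rfl⟩) _)
    constructor
    · rw [sub_le_iff_le_add]
      refine csSup_le (hne.image _) ?_
      rintro z ⟨s, hs, rfl⟩
      exact le_trans (key2 s hs) (add_le_add_left (le_csSup hB ⟨s, hs, rfl⟩) _)
    · refine csSup_le (hne.image _) ?_
      rintro z ⟨s, hs, rfl⟩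
      exact le_trans (key1 s hs) (add_le_add_left (le_csSup hA ⟨s, hs, rfl⟩) _)
  · have hB : ¬ BddAbove ((fun s => f s - δ * s) '' Icc 0 t) := by
      intro hB
      obtain ⟨M, hM⟩ := hB
      refine hA ⟨M + max δ 0 * t, ?_⟩
      rintro z ⟨s, hs, rfl⟩
      exact le_trans (key2 s hs) (add_le_add_left (hM ⟨s, hs, rfl⟩) _)
    rw [Real.sSup_of_not_bddAbove hA, Real.sSup_of_not_bddAbove hB]
    constructor <;> linarith


lemma finite_translate {Ω : Type*} [MeasurableSpace Ω] {P : ℝ → Measure Ω} {X : ℝ → Ω → ℝ}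
    {p : JumpParams} (hX : IsLevyFamily P X p) {t : ℝ} (ht : 0 ≤ t) (x r : ℝ) (N : ℕ) :
    P x {ω | ∃ k ∈ Finset.range (N+1), r < X (seq t k) ω}
      = P 0 {ω | ∃ k ∈ Finset.range (N+1), r - x < X (seq t k) ω} := by
  classical
  set Fs : Finset ℝ := insert (0:ℝ) ((Finset.range (N+1)).image (seq t)) with hFs
  have h0F : (0:ℝ) ∈ Fs := Finset.mem_insert_self _ _
  have hFpos : ∀ a ∈ Fs, 0 ≤ a := by
    intro a ha
    rcases Finset.mem_insert.1 ha with rfl | ha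
    · exact le_rfl
    · obtain ⟨k, _, rfl⟩ := Finset.mem_image.1 ha
      exact (seq_mem ht k).1
  set n := Fs.card - 1 with hn
  have hcard : Fs.card = n + 1 := (Nat.succ_pred_eq_of_pos (Finset.card_pos.2 ⟨0, h0F⟩)).symm
  set e := Fs.orderIsoOfFin hcard with he
  set ts : Fin (n+1) → ℝ := fun i => (e i : ℝ) with htsdef
  have htsF : ∀ i, ts i ∈ Fs := fun i => (e i).2
  have hmono : Monotone ts := fun i j hij => Subtype.coe_le_coe.2 (e.monotone hij)
  have hpos : ∀ i, 0 ≤ ts i := fun i => hFpos _ (htsF i)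
  have hts0 : ts 0 = 0 := by
    refine le_antisymm ?_ (hpos 0)
    have h := hmono (Fin.zero_le (e.symm ⟨0, h0F⟩))
    have h2 : ts (e.symm ⟨0, h0F⟩) = 0 := by
      simp [htsdef]
    rw [h2] at h; exact h
  have hsurj : ∀ a ∈ Fs, ∃ i, ts i = a := fun a ha =>
    ⟨e.symm ⟨a, ha⟩, by simp [htsdef]⟩
  -- increments
  set Δ : Fin n → Ω → ℝ := fun i ω => X (ts i.succ) ω - X (ts i.castSucc) ω with hΔ
  have hΔmeas : ∀ i, Measurable (Δ i) := fun i => (hX.meas _).sub (hX.meas _)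
  set Dm : Ω → (Fin n → ℝ) := fun ω i => Δ i ω with hDm
  have hDmmeas : Measurable Dm := measurable_pi_lambda _ fun i => hΔmeas i
  -- marginal laws do not depend on the starting point
  have hmarg : ∀ z : ℝ, ∀ i : Fin n, Measure.map (Δ i) (P z)
      = Measure.map (fun ω => X (ts i.succ - ts i.castSucc) ω - X 0 ω) (P 0) := by
    intro z i
    have hle : ts i.castSucc ≤ ts i.succ := hmono (le_of_lt (Fin.castSucc_lt_succ : i.castSucc < i.succ))
    have h := hX.stationary z (ts i.castSucc) (ts i.succ - ts i.castSucc) (hpos _)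
      (sub_nonneg.2 hle)
    have harg : ts i.castSucc + (ts i.succ - ts i.castSucc) = ts i.succ := by ring
    rw [harg] at h
    exact h
  -- joint law of the increments does not depend on the starting point
  have hjoint : ∀ z : ℝ, Measure.map Dm (P z) = Measure.pi (fun i =>
      Measure.map (fun ω => X (ts i.succ - ts i.castSucc) ω - X 0 ω) (P 0)) := by
    intro z
    haveI := hX.prob z
    haveI := hX.prob 0
    haveI : ∀ i : Fin n, IsProbabilityMeasure
        (Measure.map (fun ω => X (ts i.succ - ts i.castSucc) ω - X 0 ω) (P 0)) := fun i =>
      Measure.isProbabilityMeasure_map (((hX.meas _).sub (hX.meas _)).aemeasurable)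
    symm
    apply Measure.pi_eq
    intro s hs
    rw [Measure.map_apply hDmmeas (MeasurableSet.univ_pi hs)]
    have hpre : Dm ⁻¹' (Set.pi univ s) = ⋂ i, Δ i ⁻¹' (s i) := by
      ext ω; simp [hDm, Set.mem_pi]
    rw [hpre]
    have hind := hX.indep z n ts hpos hmono
    have h := hind.measure_inter_preimage_eq_mul Finset.univ (fun i _ => hs i)
    have huniv : (⋂ i ∈ (Finset.univ : Finset (Fin n)), Δ i ⁻¹' s i) = ⋂ i, Δ i ⁻¹' s i := by
      simp
    rw [huniv] at h
    rw [h]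
    refine Finset.prod_congr rfl fun i _ => ?_
    rw [← Measure.map_apply (hΔmeas i) (hs i), hmarg z i]
  -- indices realizing the seq values
  have hidxe : ∀ k : ℕ, ∃ i : Fin (n+1), k ∈ Finset.range (N+1) → ts i = seq t k := by
    intro k
    by_cases hk : k ∈ Finset.range (N+1)
    · obtain ⟨i, hi⟩ := hsurj (seq t k)
        (Finset.mem_insert_of_mem (Finset.mem_image_of_mem _ hk))
      exact ⟨i, fun _ => hi⟩
    · exact ⟨0, fun h => absurd h hk⟩
  choose idx hidx using hidxe
  -- telescoping sums
  have htel : ∀ (m : ℕ), ∀ (hm : m < n + 1), ∀ ω,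
      X (ts ⟨m, hm⟩) ω = X 0 ω + ∑ i ∈ Finset.range m,
        (if h : i < n then Δ ⟨i, h⟩ ω else 0) := by
    intro m
    induction m with
    | zero =>
      intro hm ω
      have : (⟨0, hm⟩ : Fin (n+1)) = 0 := rfl
      simp [this, hts0]
    | succ m ih =>
      intro hm ω
      have hmn : m < n := Nat.lt_of_succ_lt_succ hm
      have hm' : m < n + 1 := Nat.lt_of_lt_of_le hmn (Nat.le_succ n)
      rw [Finset.sum_range_succ, dif_pos hmn]
      have hsucc : (⟨m+1, hm⟩ : Fin (n+1)) = (⟨m, hmn⟩ : Fin n).succ := rfl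
      have hcast : (⟨m, hm'⟩ : Fin (n+1)) = (⟨m, hmn⟩ : Fin n).castSucc := rfl
      have hΔval : Δ ⟨m, hmn⟩ ω = X (ts (⟨m, hmn⟩ : Fin n).succ) ω - X (ts ⟨m, hm'⟩) ω := by
        rw [hΔ, hcast]
      rw [hsucc, ← add_assoc, ← ih hm', hΔval]
      ring
  -- the measurable target set
  set B : Set (Fin n → ℝ) := ⋃ k ∈ Finset.range (N+1),
      {d : Fin n → ℝ | r - x < ∑ i ∈ Finset.range ((idx k : Fin (n+1)) : ℕ),
        (if h : i < n then d ⟨i, h⟩ else 0)} with hB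
  have hGmeas : ∀ m : ℕ, Measurable (fun d : Fin n → ℝ =>
      ∑ i ∈ Finset.range m, (if h : i < n then d ⟨i, h⟩ else 0)) := by
    intro m
    refine Finset.measurable_sum _ fun i _ => ?_
    by_cases h : i < n
    · simp only [dif_pos h]; exact measurable_pi_apply _
    · simp only [dif_neg h]; exact measurable_const
  have hBmeas : MeasurableSet B := by
    refine MeasurableSet.biUnion (Finset.range (N+1)).countable_toSet fun k _ => ?_
    exact measurableSet_lt measurable_const (hGmeas _)
  -- starting point
  have hstart : ∀ z : ℝ, ∀ᵐ ω ∂(P z), X 0 ω = z := by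
    intro z
    haveI := hX.prob z
    have h := hX.start z
    rw [ae_iff]
    have hm : MeasurableSet {ω | X 0 ω = z} := (hX.meas 0) (measurableSet_singleton z)
    have hc : {ω | ¬ X 0 ω = z} = {ω | X 0 ω = z}ᶜ := rfl
    rw [hc, measure_compl hm (measure_ne_top _ _), h, measure_univ, tsub_self]
  -- event identification
  have hkey : ∀ z r' : ℝ, r' - z = r - x →
      P z {ω | ∃ k ∈ Finset.range (N+1), r' < X (seq t k) ω} = Measure.map Dm (P z) B := by
    intro z r' hz
    haveI := hX.prob z
    rw [Measure.map_apply hDmmeas hBmeas]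
    apply measure_congr
    rw [Filter.eventuallyEq_set]
    filter_upwards [hstart z] with ω hω
    have hXval : ∀ k, k ∈ Finset.range (N+1) → X (seq t k) ω
        = z + ∑ i ∈ Finset.range ((idx k : Fin (n+1)) : ℕ),
            (if h : i < n then Δ ⟨i, h⟩ ω else 0) := by
      intro k hk
      have h1 : ts (idx k) = seq t k := hidx k hk
      have h2 := htel ((idx k : Fin (n+1)) : ℕ) (idx k).isLt ω
      have h3 : (⟨((idx k : Fin (n+1)) : ℕ), (idx k).isLt⟩ : Fin (n+1)) = idx k := by
        apply Fin.ext; rfl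
      rw [h3, h1, hω] at h2
      exact h2
    have hDval : ∀ m : ℕ, (∑ i ∈ Finset.range m, (if h : i < n then (Dm ω) ⟨i, h⟩ else 0))
        = ∑ i ∈ Finset.range m, (if h : i < n then Δ ⟨i, h⟩ ω else 0) := by
      intro m; rfl
    constructor
    · rintro ⟨k, hk, hlt⟩
      refine Set.mem_biUnion hk ?_
      simp only [Set.mem_setOf_eq, hDval]
      rw [hXval k hk] at hlt
      linarith
    · intro hmem
      obtain ⟨k, hk, hlt⟩ := Set.mem_iUnion₂.1 hmem
      have hlt' : r - x < ∑ i ∈ Finset.range ((idx k : Fin (n+1)) : ℕ),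
          (if h : i < n then Δ ⟨i, h⟩ ω else 0) := hlt
      refine ⟨k, hk, ?_⟩
      rw [hXval k hk]
      linarith
  rw [hkey x r (by ring), hkey 0 (r - x) (by ring), hjoint x, hjoint 0]


/-- Lemma 3.1, (3.11): for every `t ≥ 0` and `y ∈ ℝ`,
`∫ |P_x(X̄_t > y) − P̂_x(Ȳ_t > y)| dx ≤ |δ| t`. -/
theorem statement_8
    {Ω : Type*} [MeasurableSpace Ω] (P : ℝ → Measure Ω) (X : ℝ → Ω → ℝ)
    (p : JumpParams) (δ : ℝ)
    (hX : IsLevyFamily P X p) (hp : p.IsDensity)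
    (t : ℝ) (ht : 0 ≤ t) (y : ℝ) :
    ∫⁻ x : ℝ, ENNReal.ofReal
        |((P x) {ω | y < runSup X t ω}).toReal
          - ((P x) {ω | y < runSup (drifted X δ) t ω}).toReal|
      ≤ ENNReal.ofReal (|δ| * t) := by
  classical
  set cp := max δ 0 * t with hcpdef
  set cm := max (-δ) 0 * t with hcmdef
  have hcp0 : 0 ≤ cp := mul_nonneg (le_max_right _ _) ht
  have hcm0 : 0 ≤ cm := mul_nonneg (le_max_right _ _) ht
  set u := y - cm with hudef
  set v := y + cp with hvdef
  have huv : u ≤ v := by rw [hudef, hvdef]; linarith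
  have habsuv : v - u = |δ| * t := by
    have hmax : max δ 0 + max (-δ) 0 = |δ| := by
      rcases le_total δ 0 with h | h
      · rw [max_eq_right h, max_eq_left (neg_nonneg.2 h), abs_of_nonpos h]; ring
      · rw [max_eq_left h, max_eq_right (neg_nonpos.2 h), abs_of_nonneg h]; ring
    rw [hudef, hvdef, hcpdef, hcmdef, ← hmax]; ring
  -- countable description of the running supremum events
  set SS : ℝ → Set Ω := fun r => {ω | ∃ m : ℕ, r < X (seq t m) ω} with hSS
  have hSSmeas : ∀ r, MeasurableSet (SS r) := by
    intro r
    have : SS r = ⋃ m : ℕ, {ω | r < X (seq t m) ω} := by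
      ext ω; simp [hSS]
    rw [this]
    exact MeasurableSet.iUnion fun m => measurableSet_lt measurable_const (hX.meas _)
  -- step 1 : pointwise bound by the probability of a window event
  have hle : ∀ x : ℝ, ENNReal.ofReal |((P x) {ω | y < runSup X t ω}).toReal
      - ((P x) {ω | y < runSup (drifted X δ) t ω}).toReal|
      ≤ (P x) {ω | u < runSup X t ω ∧ runSup X t ω ≤ v} := by
    intro x
    haveI := hX.prob x
    set A := {ω | y < runSup X t ω} with hA
    set Bs := {ω | y < runSup (drifted X δ) t ω} with hBs
    set E := {ω | u < runSup X t ω ∧ runSup X t ω ≤ v} with hE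
    have hcmp : ∀ ω : Ω, runSup X t ω - cp ≤ runSup (drifted X δ) t ω
        ∧ runSup (drifted X δ) t ω ≤ runSup X t ω + cm := by
      intro ω
      exact sSup_drift_compare (f := fun s => X s ω) (δ := δ) ht
    have hAB : A ⊆ Bs ∪ E := by
      intro ω hω
      rw [hA, Set.mem_setOf_eq] at hω
      obtain ⟨h1, h2⟩ := hcmp ω
      rcases le_or_gt (runSup X t ω) v with hv' | hv'
      · exact Or.inr ⟨by rw [hudef]; linarith, hv'⟩
      · refine Or.inl ?_
        rw [hBs, Set.mem_setOf_eq]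
        rw [hvdef] at hv'
        linarith
    have hBA : Bs ⊆ A ∪ E := by
      intro ω hω
      rw [hBs, Set.mem_setOf_eq] at hω
      obtain ⟨h1, h2⟩ := hcmp ω
      rcases le_or_gt (runSup X t ω) v with hv' | hv'
      · refine Or.inr ⟨?_, hv'⟩
        rw [hudef]; linarith
      · refine Or.inl ?_
        rw [hA, Set.mem_setOf_eq]
        rw [hvdef] at hv'
        linarith
    have h1 : (P x) A ≤ (P x) Bs + (P x) E :=
      le_trans (measure_mono hAB) (measure_union_le _ _)
    have h2 : (P x) Bs ≤ (P x) A + (P x) E :=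
      le_trans (measure_mono hBA) (measure_union_le _ _)
    have habs2 : |((P x) A).toReal - ((P x) Bs).toReal| ≤ ((P x) E).toReal := by
      rw [abs_sub_le_iff]
      constructor
      · have h3 := ENNReal.toReal_mono
          (by exact ENNReal.add_ne_top.2 ⟨measure_ne_top _ _, measure_ne_top _ _⟩) h1
        rw [ENNReal.toReal_add (measure_ne_top _ _) (measure_ne_top _ _)] at h3
        linarith
      · have h3 := ENNReal.toReal_mono
          (by exact ENNReal.add_ne_top.2 ⟨measure_ne_top _ _, measure_ne_top _ _⟩) h2
        rw [ENNReal.toReal_add (measure_ne_top _ _) (measure_ne_top _ _)] at h3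
        linarith
    calc ENNReal.ofReal |((P x) A).toReal - ((P x) Bs).toReal|
        ≤ ENNReal.ofReal (((P x) E).toReal) := ENNReal.ofReal_le_ofReal habs2
      _ = (P x) E := ENNReal.ofReal_toReal (measure_ne_top _ _)
  refine le_trans (lintegral_mono hle) ?_
  -- step 2 : translation to the law under `P 0`
  have hEeq : ∀ x : ℝ, (P x) {ω | u < runSup X t ω ∧ runSup X t ω ≤ v}
      = (P 0) (SS (u - x) \ SS (v - x)) := by
    intro x
    haveI := hX.prob x
    haveI := hX.prob 0
    have hae : ∀ x' : ℝ, ∀ᵐ ω ∂(P x'), ∀ r : ℝ, (r < runSup X t ω ↔ ω ∈ SS r) := by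
      intro x'
      filter_upwards [hX.cadlag x'] with ω hω
      intro r
      have hbdd := bddAbove_of_cadlag ht hω.1 hω.2
      exact lt_sSup_iff_seq ht hω.1 hbdd
    have h1 : (P x) {ω | u < runSup X t ω ∧ runSup X t ω ≤ v} = (P x) (SS u \ SS v) := by
      apply measure_congr
      rw [Filter.eventuallyEq_set]
      filter_upwards [hae x] with ω hω
      simp only [Set.mem_setOf_eq, Set.mem_diff]
      rw [← hω u, ← hω v]
      constructor
      · rintro ⟨ha, hb⟩; exact ⟨ha, not_lt.2 hb⟩
      · rintro ⟨ha, hb⟩; exact ⟨ha, not_lt.1 hb⟩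
    have hsub : ∀ r r' : ℝ, r ≤ r' → SS r' ⊆ SS r := by
      rintro r r' hrr' ω ⟨m, hm⟩; exact ⟨m, lt_of_le_of_lt hrr' hm⟩
    have htrans : ∀ x' r : ℝ, (P x') (SS r) = (P 0) (SS (r - x')) := by
      intro x' r
      have hSSU : ∀ r' : ℝ, SS r'
          = ⋃ N : ℕ, {ω | ∃ k ∈ Finset.range (N+1), r' < X (seq t k) ω} := by
        intro r'; ext ω
        simp only [hSS, Set.mem_setOf_eq, Set.mem_iUnion]
        constructor
        · rintro ⟨m, hm⟩; exact ⟨m, m, Finset.mem_range.2 (Nat.lt_succ_self m), hm⟩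
        · rintro ⟨N, k, _, hk⟩; exact ⟨k, hk⟩
      have hmon : ∀ r' : ℝ,
          Monotone (fun N : ℕ => {ω | ∃ k ∈ Finset.range (N+1), r' < X (seq t k) ω}) := by
        rintro r' N M hNM ω ⟨k, hk, h⟩
        refine ⟨k, Finset.mem_range.2 ?_, h⟩
        have := Finset.mem_range.1 hk
        omega
      rw [hSSU r, hSSU (r - x'), Monotone.measure_iUnion (hmon r),
        Monotone.measure_iUnion (hmon (r - x'))]
      exact iSup_congr fun N => finite_translate hX ht x' r N
    rw [h1, measure_diff (hsub _ _ huv) ((hSSmeas v).nullMeasurableSet) (measure_ne_top _ _),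
      htrans x u, htrans x v,
      ← measure_diff (hsub _ _ (by linarith : u - x ≤ v - x))
        ((hSSmeas (v - x)).nullMeasurableSet) (measure_ne_top _ _)]
  rw [lintegral_congr hEeq]
  -- step 3 : Fubini
  haveI := hX.prob 0
  set sU : Set (ℝ × Ω) := {q | ∃ m : ℕ, u - q.1 < X (seq t m) q.2} with hsU
  set sV : Set (ℝ × Ω) := {q | ∃ m : ℕ, v - q.1 < X (seq t m) q.2} with hsV
  have hsUmeas : MeasurableSet sU := by
    have : sU = ⋃ m : ℕ, {q : ℝ × Ω | u < X (seq t m) q.2 + q.1} := by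
      ext q
      simp only [hsU, Set.mem_setOf_eq, Set.mem_iUnion]
      constructor <;> (rintro ⟨m, hm⟩; exact ⟨m, by linarith⟩)
    rw [this]
    exact MeasurableSet.iUnion fun m => measurableSet_lt measurable_const
      (((hX.meas _).comp measurable_snd).add measurable_fst)
  have hsVmeas : MeasurableSet sV := by
    have : sV = ⋃ m : ℕ, {q : ℝ × Ω | v < X (seq t m) q.2 + q.1} := by
      ext q
      simp only [hsV, Set.mem_setOf_eq, Set.mem_iUnion]
      constructor <;> (rintro ⟨m, hm⟩; exact ⟨m, by linarith⟩)
    rw [this]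
    exact MeasurableSet.iUnion fun m => measurableSet_lt measurable_const
      (((hX.meas _).comp measurable_snd).add measurable_fst)
  have hF : ∫⁻ x, (P 0) (SS (u - x) \ SS (v - x))
      = ((volume : Measure ℝ).prod (P 0)) (sU \ sV) := by
    rw [Measure.prod_apply (hsUmeas.diff hsVmeas)]
    refine lintegral_congr fun x => ?_
    rfl
  rw [hF, Measure.prod_apply_symm (hsUmeas.diff hsVmeas)]
  have hsl : ∀ ω : Ω, (volume : Measure ℝ) ((fun x => (x, ω)) ⁻¹' (sU \ sV))
      ≤ ENNReal.ofReal (v - u) := by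
    intro ω
    set T : Set ℝ := {x | ∃ m : ℕ, u - x < X (seq t m) ω} with hT
    have hpre : ((fun x => (x, ω)) ⁻¹' (sU \ sV)) = T \ {x | x - (v - u) ∈ T} := by
      ext x
      simp only [Set.mem_preimage, Set.mem_diff, Set.mem_setOf_eq, hT, hsU, hsV]
      constructor
      · rintro ⟨h1, h2⟩
        exact ⟨h1, fun hm => h2 (by obtain ⟨m, hm'⟩ := hm; exact ⟨m, by linarith⟩)⟩
      · rintro ⟨h1, h2⟩
        exact ⟨h1, fun hm => h2 (by obtain ⟨m, hm'⟩ := hm; exact ⟨m, by linarith⟩)⟩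
    rw [hpre]
    have hup : ∀ x x' : ℝ, x ≤ x' → x ∈ T → x' ∈ T := by
      rintro x x' hxx' ⟨m, hm⟩; exact ⟨m, by linarith⟩
    by_cases hTne : T.Nonempty
    · by_cases hTb : BddBelow T
      · have hsub2 : T \ {x | x - (v - u) ∈ T} ⊆ Icc (sInf T) (sInf T + (v - u)) := by
          rintro x ⟨h1, h2⟩
          refine ⟨csInf_le hTb h1, ?_⟩
          by_contra hgt
          push_neg at hgt
          have hlt2 : sInf T < x - (v - u) := by linarith
          obtain ⟨z, hz, hzlt⟩ := exists_lt_of_csInf_lt hTne hlt2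
          exact h2 (hup z _ (le_of_lt hzlt) hz)
        refine le_trans (measure_mono hsub2) ?_
        rw [Real.volume_Icc]
        simp
      · have hemp : T \ {x | x - (v - u) ∈ T} = ∅ := by
          rw [Set.eq_empty_iff_forall_notMem]
          rintro x ⟨h1, h2⟩
          apply h2
          obtain ⟨z, hz, hzlt⟩ := not_bddBelow_iff.1 hTb (x - (v - u))
          exact hup z _ (le_of_lt hzlt) hz
        simp [hemp]
    · have hTe : T = ∅ := Set.not_nonempty_iff_eq_empty.1 hTne
      simp [hTe]
  refine le_trans (lintegral_mono hsl) ?_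
  rw [lintegral_const, measure_univ, mul_one, habsuv]


end RefractedLevy
end
end

section
/- Let M,N≥1, let β̂_1,…,β̂_M be distinct nonzero complex numbers, let γ̂_1,…,γ̂_N be distinct nonzero complex numbers with β̂_i+γ̂_j≠0 for all i,j, and let Ĉ_1,…,Ĉ_M and D̂_1,…,D̂_N be complex numbers with Σ_{i=1}^M Ĉ_i/β̂_i = 1 and Σ_{j=1}^N D̂_j/γ̂_j = 1. Define Ĥ_k := (Ĉ_k/β̂_k) Σ_{j=1}^N D̂_j/(β̂_k+γ̂_j) for 1≤k≤M, and Q̂_k := D̂_k Σ_{i=1}^M Ĉ_i/(β̂_i(β̂_i+γ̂_k)) − D̂_k/γ̂_k for 1≤k≤N. Then for every θ∈ℂ not equal to any β̂_i nor to any −γ̂_j: Σ_{k=1}^M θĤ_k/(β̂_k−θ) + Σ_{k=1}^N θQ̂_k/(θ+γ̂_k) + 1 = ( Σ_{i=1}^M Ĉ_i/(β̂_i−θ) ) · ( Σ_{j=1}^N D̂_j/(θ+γ̂_j) ). -/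
noncomputable section

/-- identity (A.29): with `Ĥ_k` and `Q̂_k` built from `Ĉ_i, D̂_j` as in
(A.17)–(A.18), one has
`Σ θĤ_k/(β̂_k−θ) + Σ θQ̂_k/(θ+γ̂_k) + 1 = (Σ Ĉ_i/(β̂_i−θ))·(Σ D̂_j/(θ+γ̂_j))`. -/
theorem statement_16
    (M N : ℕ) (hM : 1 ≤ M) (hN : 1 ≤ N)
    (βh : Fin M → ℂ) (γh : Fin N → ℂ)
    (hβ0 : ∀ i, βh i ≠ 0) (hγ0 : ∀ j, γh j ≠ 0)
    (hβinj : Function.Injective βh) (hγinj : Function.Injective γh)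
    (hsum : ∀ i j, βh i + γh j ≠ 0)
    (C : Fin M → ℂ) (D : Fin N → ℂ)
    (hC : ∑ i, C i / βh i = 1) (hD : ∑ j, D j / γh j = 1)
    (H : Fin M → ℂ) (Q : Fin N → ℂ)
    (hH : ∀ k, H k = C k / βh k * ∑ j, D j / (βh k + γh j))
    (hQ : ∀ k, Q k = D k * (∑ i, C i / (βh i * (βh i + γh k))) - D k / γh k)
    (θ : ℂ) (hθ1 : ∀ i, θ ≠ βh i) (hθ2 : ∀ j, θ ≠ -γh j) :
    (∑ k, θ * H k / (βh k - θ)) + (∑ k, θ * Q k / (θ + γh k)) + 1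
      = (∑ i, C i / (βh i - θ)) * ∑ j, D j / (θ + γh j) := by
  have hβθ : ∀ i, βh i - θ ≠ 0 := fun i => sub_ne_zero.mpr (fun h => hθ1 i h.symm)
  have hθγ : ∀ j, θ + γh j ≠ 0 := fun j h => hθ2 j (eq_neg_of_add_eq_zero_left h)
  have e1 : (∑ k, θ * H k / (βh k - θ))
      = ∑ k, ∑ j, θ * (C k / βh k * (D j / (βh k + γh j))) / (βh k - θ) := by
    refine Finset.sum_congr rfl fun k _ => ?_
    rw [hH, Finset.mul_sum, Finset.mul_sum, Finset.sum_div]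
  have e2 : (∑ k, θ * Q k / (θ + γh k))
      = (∑ k, ∑ i, θ * (D k * (C i / (βh i * (βh i + γh k)))) / (θ + γh k))
        - ∑ k, (D k / γh k - D k / (θ + γh k)) := by
    rw [← Finset.sum_sub_distrib]
    refine Finset.sum_congr rfl fun k _ => ?_
    rw [hQ, mul_sub, sub_div, Finset.mul_sum, Finset.mul_sum, Finset.sum_div]
    congr 1
    field_simp [hγ0 k, hθγ k]
    ring
  have key : ∀ i j, θ * (C i / βh i * (D j / (βh i + γh j))) / (βh i - θ)
      + θ * (D j * (C i / (βh i * (βh i + γh j)))) / (θ + γh j)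
      = C i / (βh i - θ) * (D j / (θ + γh j)) - C i / βh i * (D j / (θ + γh j)) := by
    intro i j
    field_simp [hβ0 i, hβθ i, hθγ j, hsum i j]
    ring
  have e3 : (∑ k, ∑ i, θ * (D k * (C i / (βh i * (βh i + γh k)))) / (θ + γh k))
      = ∑ i, ∑ k, θ * (D k * (C i / (βh i * (βh i + γh k)))) / (θ + γh k) :=
    Finset.sum_comm
  rw [e1, e2, e3]
  have e4 : (∑ k, ∑ j, θ * (C k / βh k * (D j / (βh k + γh j))) / (βh k - θ))
      + (∑ i, ∑ k, θ * (D k * (C i / (βh i * (βh i + γh k)))) / (θ + γh k))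
      = ∑ i, ∑ j, (C i / (βh i - θ) * (D j / (θ + γh j)) - C i / βh i * (D j / (θ + γh j))) := by
    rw [← Finset.sum_add_distrib]
    refine Finset.sum_congr rfl fun i _ => ?_
    rw [← Finset.sum_add_distrib]
    exact Finset.sum_congr rfl fun j _ => key i j
  have e5 : (∑ i, ∑ j, (C i / (βh i - θ) * (D j / (θ + γh j)) - C i / βh i * (D j / (θ + γh j))))
      = (∑ i, C i / (βh i - θ)) * (∑ j, D j / (θ + γh j))
        - (∑ j, D j / (θ + γh j)) := by
    rw [Finset.sum_congr rfl fun i _ => Finset.sum_sub_distrib _ _,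
      Finset.sum_sub_distrib]
    congr 1
    · rw [Finset.sum_mul_sum]
    · rw [← Finset.sum_mul_sum, hC, one_mul]
  have e6 : (∑ k, (D k / γh k - D k / (θ + γh k))) = 1 - ∑ k, D k / (θ + γh k) := by
    rw [Finset.sum_sub_distrib, hD]
  linear_combination e4 + e5 - e6
end
end

section
/- Let M≥1, let β̂_1,…,β̂_M be distinct complex numbers with positive real parts, and let β_1,…,β_M be nonzero complex numbers. Define F₀(x) := Σ_{i=1}^M e^{−β̂_i x} · Π_{k=1}^M ((β̂_i−β_k)/β_k) · Π_{k≠i} (β̂_k/(β̂_i−β̂_k)) for x>0. Then for every s∈ℂ with Re(s)>0: ∫₀^∞ e^{−sx} F₀(x) dx = (1/s) ( Π_{k=1}^M ((s+β_k)/β_k) · Π_{k=1}^M (β̂_k/(s+β̂_k)) − 1 ). -/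
open MeasureTheory Set

noncomputable section

lemma aux_ne_zero {a : ℂ} (ha : 0 < a.re) : a ≠ 0 := by
  intro h; rw [h] at ha; simp at ha

lemma aux_integrableOn (a : ℂ) (ha : 0 < a.re) :
    IntegrableOn (fun x : ℝ => Complex.exp (-a * x)) (Ioi 0) := by
  apply Integrable.mono' (exp_neg_integrableOn_Ioi 0 ha)
  · exact (Complex.continuous_exp.comp
      (continuous_const.mul Complex.continuous_ofReal)).aestronglyMeasurable
  · filter_upwards with x
    rw [Complex.norm_exp]
    apply le_of_eq
    congr 1
    simp [Complex.mul_re]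

lemma aux_integral (a : ℂ) (ha : 0 < a.re) :
    ∫ x in Ioi (0:ℝ), Complex.exp (-a * x) = 1 / a := by
  have ha0 : a ≠ 0 := aux_ne_zero ha
  have hderiv : ∀ x ∈ Ioi (0:ℝ),
      HasDerivAt (fun x : ℝ => -Complex.exp (-a * x) / a) (Complex.exp (-a * x)) x := by
    intro x _
    have h1 : HasDerivAt (fun z : ℂ => -Complex.exp (-a * z) / a)
        (Complex.exp (-a * x)) (x : ℂ) := by
      have h0 : HasDerivAt (fun z : ℂ => -a * z) (-a) (x : ℂ) := by
        simpa using (hasDerivAt_id (x:ℂ)).const_mul (-a)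
      have h2 := ((Complex.hasDerivAt_exp (-a * (x:ℂ))).comp (x:ℂ) h0).neg.div_const a
      have he : -(Complex.exp (-a * (x:ℂ)) * -a) / a = Complex.exp (-a * x) := by
        rw [mul_neg, neg_neg, mul_div_assoc, div_self ha0, mul_one]
      rw [he] at h2
      exact h2
    exact h1.comp_ofReal
  have hcont : ContinuousWithinAt (fun x : ℝ => -Complex.exp (-a * x) / a) (Ici 0) 0 :=
    (((Complex.continuous_exp.comp
      (continuous_const.mul Complex.continuous_ofReal)).neg).div_const a).continuousWithinAt
  have htend : Filter.Tendsto (fun x : ℝ => -Complex.exp (-a * x) / a)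
      Filter.atTop (nhds 0) := by
    rw [tendsto_zero_iff_norm_tendsto_zero]
    have heq : (fun x : ℝ => ‖-Complex.exp (-a * x) / a‖)
        = fun x => Real.exp (-a.re * x) / ‖a‖ := by
      funext x
      rw [norm_div, norm_neg, Complex.norm_exp]
      congr 2
      simp [Complex.mul_re]
    rw [heq]
    have h3 : Filter.Tendsto (fun x : ℝ => -a.re * x) Filter.atTop Filter.atBot := by
      apply Filter.Tendsto.const_mul_atTop_of_neg (neg_neg_iff_pos.mpr ha) Filter.tendsto_id
    have := Real.tendsto_exp_atBot.comp h3
    simpa using this.div_const ‖a‖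
  have := integral_Ioi_of_hasDerivAt_of_tendsto hcont hderiv (aux_integrableOn a ha) htend
  rw [this]
  simp [neg_div]

lemma aux_poly (M : ℕ) (hM : 1 ≤ M) (βh β : Fin M → ℂ)
    (hβh_inj : Function.Injective βh) (hβh0 : ∀ i, βh i ≠ 0) (z : ℂ) :
    (∏ k, (z + β k)) * (∏ k, βh k) - (∏ k, β k) * (∏ k, (z + βh k))
      = ∑ i, z * ((∏ k, (βh i - β k)) *
          ∏ k ∈ Finset.univ.erase i, βh k / (βh i - βh k)) *
          ∏ k ∈ Finset.univ.erase i, (z + βh k) := by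
  classical
  set P : Polynomial ℂ :=
    (∏ k, (Polynomial.X + Polynomial.C (β k))) * Polynomial.C (∏ k, βh k)
      - Polynomial.C (∏ k, β k) * ∏ k, (Polynomial.X + Polynomial.C (βh k)) with hP
  set Q : Polynomial ℂ :=
    ∑ i, Polynomial.X * Polynomial.C ((∏ k, (βh i - β k)) *
        ∏ k ∈ Finset.univ.erase i, βh k / (βh i - βh k)) *
        ∏ k ∈ Finset.univ.erase i, (Polynomial.X + Polynomial.C (βh k)) with hQ
  have hprodnd : ∀ (t : Finset (Fin M)) (f : Fin M → ℂ),
      (∏ k ∈ t, (Polynomial.X + Polynomial.C (f k))).natDegree ≤ t.card := by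
    intro t f
    refine le_trans (Polynomial.natDegree_prod_le _ _) ?_
    simp [Polynomial.natDegree_X_add_C]
  have hPnd : P.natDegree ≤ M := by
    refine le_trans (Polynomial.natDegree_sub_le _ _) (max_le ?_ ?_)
    · refine le_trans (Polynomial.natDegree_mul_le) ?_
      have := hprodnd Finset.univ β
      simp only [Polynomial.natDegree_C, add_zero, Finset.card_univ, Fintype.card_fin] at this ⊢
      exact this
    · refine le_trans (Polynomial.natDegree_mul_le) ?_
      have := hprodnd Finset.univ βh
      simp only [Polynomial.natDegree_C, zero_add, Finset.card_univ, Fintype.card_fin] at this ⊢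
      exact this
  have hQnd : Q.natDegree ≤ M := by
    refine Polynomial.natDegree_sum_le_of_forall_le _ _ fun i _ => ?_
    refine le_trans (Polynomial.natDegree_mul_le) ?_
    have h1 : (Polynomial.X * Polynomial.C ((∏ k, (βh i - β k)) *
        ∏ k ∈ Finset.univ.erase i, βh k / (βh i - βh k)) : Polynomial ℂ).natDegree ≤ 1 := by
      refine le_trans (Polynomial.natDegree_mul_le) ?_
      rw [Polynomial.natDegree_X, Polynomial.natDegree_C]
    have h2 := hprodnd (Finset.univ.erase i) βh
    have hcard : (Finset.univ.erase i).card = M - 1 := by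
      simp [Finset.card_erase_of_mem]
    omega
  set S : Finset ℂ := insert 0 (Finset.image (fun i => -(βh i)) Finset.univ) with hS
  have hScard : S.card = M + 1 := by
    rw [hS, Finset.card_insert_of_notMem, Finset.card_image_of_injective _
      (fun a b hab => hβh_inj (by simpa using neg_injective hab))]
    · simp
    · simp only [Finset.mem_image, Finset.mem_univ, true_and]
      rintro ⟨i, hi⟩
      exact hβh0 i (by simpa using hi.symm)
  have hPQ : P = Q := by
    apply Polynomial.eq_of_degrees_lt_of_eval_finset_eq S
    · rw [hScard]
      calc P.degree ≤ (P.natDegree : WithBot ℕ) := Polynomial.degree_le_natDegree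
        _ < ((M + 1 : ℕ) : WithBot ℕ) := by exact_mod_cast Nat.lt_succ_of_le hPnd
    · rw [hScard]
      calc Q.degree ≤ (Q.natDegree : WithBot ℕ) := Polynomial.degree_le_natDegree
        _ < ((M + 1 : ℕ) : WithBot ℕ) := by exact_mod_cast Nat.lt_succ_of_le hQnd
    · intro x hx
      rw [hS] at hx
      simp only [Finset.mem_insert, Finset.mem_image, Finset.mem_univ, true_and] at hx
      rcases hx with rfl | ⟨j, rfl⟩
      · simp [hP, hQ, Polynomial.eval_prod, Polynomial.eval_finset_sum, mul_comm]
      · simp only [hP, hQ, Polynomial.eval_sub, Polynomial.eval_mul, Polynomial.eval_prod,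
          Polynomial.eval_finset_sum, Polynomial.eval_add, Polynomial.eval_X, Polynomial.eval_C]
        have hz : ∏ k, (-(βh j) + βh k) = 0 :=
          Finset.prod_eq_zero (Finset.mem_univ j) (by ring)
        rw [hz, mul_zero, sub_zero]
        rw [Finset.sum_eq_single_of_mem j (Finset.mem_univ j)]
        · symm
          have he : ∏ k ∈ Finset.univ.erase j, (βh k / (βh j - βh k)) *
              (-(βh j) + βh k) = ∏ k ∈ Finset.univ.erase j, (-(βh k)) := by
            refine Finset.prod_congr rfl fun k hk => ?_
            have hne : βh j - βh k ≠ 0 := by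
              rw [sub_ne_zero]
              exact fun h => (Finset.mem_erase.mp hk).1 (hβh_inj h.symm)
            field_simp [hne]
            ring
          calc -(βh j) * ((∏ k, (βh j - β k)) *
                ∏ k ∈ Finset.univ.erase j, βh k / (βh j - βh k)) *
                ∏ k ∈ Finset.univ.erase j, (-(βh j) + βh k)
              = -(βh j) * (∏ k, (βh j - β k)) *
                ∏ k ∈ Finset.univ.erase j, ((βh k / (βh j - βh k)) * (-(βh j) + βh k)) := by
                rw [Finset.prod_mul_distrib]; ring
            _ = (∏ k, (βh j - β k)) *
                (-(βh j) * ∏ k ∈ Finset.univ.erase j, (-(βh k))) := by rw [he]; ring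
            _ = (∏ k, (βh j - β k)) * ∏ k, (-(βh k)) := by
                rw [Finset.mul_prod_erase _ (fun k => -(βh k)) (Finset.mem_univ j)]
            _ = ∏ k, ((βh j - β k) * (-(βh k))) := by rw [Finset.prod_mul_distrib]
            _ = ∏ k, ((-(βh j) + β k) * βh k) := by
                refine Finset.prod_congr rfl fun k _ => by ring
            _ = (∏ k, (-(βh j) + β k)) * ∏ k, βh k := Finset.prod_mul_distrib
        · intro i _ hij
          have hz2 : ∏ k ∈ Finset.univ.erase i, (-(βh j) + βh k) = 0 :=
            Finset.prod_eq_zero (Finset.mem_erase.mpr ⟨hij.symm, Finset.mem_univ j⟩)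
              (by ring)
          rw [hz2, mul_zero]
  have := congrArg (Polynomial.eval z) hPQ
  simpa [hP, hQ, Polynomial.eval_prod, Polynomial.eval_finset_sum] using this

lemma aux_key (M : ℕ) (hM : 1 ≤ M) (βh β : Fin M → ℂ)
    (hβh_inj : Function.Injective βh) (hβh0 : ∀ i, βh i ≠ 0)
    (hβ0 : ∀ i, β i ≠ 0) (s : ℂ) (hs0 : s ≠ 0) (hsβh : ∀ i, s + βh i ≠ 0) :
    ∑ i, (∏ k, (βh i - β k) / β k) *
        (∏ k ∈ Finset.univ.erase i, βh k / (βh i - βh k)) * (1 / (s + βh i))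
      = (1 / s) * ((∏ k, (s + β k) / β k) * (∏ k, βh k / (s + βh k)) - 1) := by
  classical
  have hB : (∏ k, β k) ≠ 0 := Finset.prod_ne_zero_iff.mpr fun k _ => hβ0 k
  have hT : (∏ k, (s + βh k)) ≠ 0 := Finset.prod_ne_zero_iff.mpr fun k _ => hsβh k
  have hD : s * (∏ k, β k) * (∏ k, (s + βh k)) ≠ 0 := by
    exact mul_ne_zero (mul_ne_zero hs0 hB) hT
  apply mul_right_cancel₀ hD
  have hL : (∑ i, (∏ k, (βh i - β k) / β k) *
        (∏ k ∈ Finset.univ.erase i, βh k / (βh i - βh k)) * (1 / (s + βh i))) *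
        (s * (∏ k, β k) * (∏ k, (s + βh k)))
      = ∑ i, s * ((∏ k, (βh i - β k)) *
          ∏ k ∈ Finset.univ.erase i, βh k / (βh i - βh k)) *
          ∏ k ∈ Finset.univ.erase i, (s + βh k) := by
    rw [Finset.sum_mul]
    refine Finset.sum_congr rfl fun i _ => ?_
    rw [Finset.prod_div_distrib]
    rw [show (∏ k, (s + βh k)) = (s + βh i) * ∏ k ∈ Finset.univ.erase i, (s + βh k) from
      (Finset.mul_prod_erase _ _ (Finset.mem_univ i)).symm]
    have hsb := hsβh i
    set E := ∏ k ∈ Finset.univ.erase i, βh k / (βh i - βh k) with hE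
    field_simp
  rw [hL, ← aux_poly M hM βh β hβh_inj hβh0 s]
  rw [Finset.prod_div_distrib, Finset.prod_div_distrib]
  field_simp
  try ring
  try tauto

/-- identity (3.7): the Laplace transform of
`F₀(x) = Σ_i e^{−β̂_i x} Π_k((β̂_i−β_k)/β_k) Π_{k≠i}(β̂_k/(β̂_i−β̂_k))` is
`(1/s)(Π((s+β_k)/β_k)·Π(β̂_k/(s+β̂_k)) − 1)` for `Re s > 0`. -/
theorem statement_17
    (M : ℕ) (hM : 1 ≤ M) (βh β : Fin M → ℂ)
    (hβh_inj : Function.Injective βh) (hβh_re : ∀ i, 0 < (βh i).re)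
    (hβ0 : ∀ i, β i ≠ 0)
    (s : ℂ) (hs : 0 < s.re) :
    ∫ x in Ioi (0:ℝ), Complex.exp (-s * (x : ℂ)) *
        ∑ i, Complex.exp (-(βh i) * (x : ℂ)) * (∏ k, (βh i - β k) / β k) *
          ∏ k ∈ Finset.univ.erase i, βh k / (βh i - βh k)
      = (1 / s) * ((∏ k, (s + β k) / β k) * (∏ k, βh k / (s + βh k)) - 1) := by
  have hre : ∀ i, 0 < (s + βh i).re := fun i => by
    rw [Complex.add_re]; exact add_pos hs (hβh_re i)
  have h1 : ∀ x : ℝ, Complex.exp (-s * (x : ℂ)) *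
        ∑ i, Complex.exp (-(βh i) * (x : ℂ)) * (∏ k, (βh i - β k) / β k) *
          ∏ k ∈ Finset.univ.erase i, βh k / (βh i - βh k)
      = ∑ i, ((∏ k, (βh i - β k) / β k) *
          (∏ k ∈ Finset.univ.erase i, βh k / (βh i - βh k))) *
          Complex.exp (-(s + βh i) * (x : ℂ)) := by
    intro x
    rw [Finset.mul_sum]
    refine Finset.sum_congr rfl fun i _ => ?_
    rw [show (-(s + βh i) * (x : ℂ)) = -s * x + -(βh i) * x by ring, Complex.exp_add]
    ring
  rw [MeasureTheory.setIntegral_congr_fun measurableSet_Ioi fun x _ => h1 x]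
  rw [MeasureTheory.integral_finset_sum _ fun i _ =>
    ((aux_integrableOn (s + βh i) (hre i)).const_mul _)]
  simp_rw [MeasureTheory.integral_const_mul, aux_integral _ (hre _)]
  exact aux_key M hM βh β hβh_inj (fun i => aux_ne_zero (hβh_re i)) hβ0 s
    (aux_ne_zero hs) (fun i => aux_ne_zero (hre i))
end
end

section
/- Let M≥1, let β̂_1,…,β̂_M be distinct nonzero complex numbers, and let β_1,…,β_M be nonzero complex numbers. Then Σ_{i=1}^M Π_{k=1}^M ((β̂_i−β_k)/β_k) · Π_{k≠i} (β̂_k/(β̂_i−β̂_k)) = (Π_{k=1}^M β̂_k)/(Π_{k=1}^M β_k) − 1. -/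
noncomputable section

open Polynomial Finset

private lemma prod_neg_aux {ι : Type*} (s : Finset ι) (f : ι → ℂ) :
    ∏ i ∈ s, (-f i) = (-1) ^ s.card * ∏ i ∈ s, f i := by
  rw [← Finset.prod_const, ← Finset.prod_mul_distrib]
  exact Finset.prod_congr rfl fun i _ => (neg_one_mul _).symm

/-- the value `F₀(0+)`, cf. (2.12):
`Σ_i Π_k((β̂_i−β_k)/β_k) Π_{k≠i}(β̂_k/(β̂_i−β̂_k)) = (Π β̂_k)/(Π β_k) − 1`. -/
theorem statement_18
    (M : ℕ) (hM : 1 ≤ M) (βh β : Fin M → ℂ)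
    (hβh0 : ∀ i, βh i ≠ 0) (hβh_inj : Function.Injective βh)
    (hβ0 : ∀ i, β i ≠ 0) :
    ∑ i, (∏ k, (βh i - β k) / β k) * ∏ k ∈ Finset.univ.erase i, βh k / (βh i - βh k)
      = (∏ k, βh k) / (∏ k, β k) - 1 := by
  classical
  obtain ⟨N, rfl⟩ : ∃ N, M = N + 1 := ⟨M - 1, by omega⟩
  have hβprod : (∏ k, β k) ≠ 0 := Finset.prod_ne_zero_iff.mpr fun k _ => hβ0 k
  set P : ℂ[X] := ∏ k, (X - C (β k)) with hPdef
  set R : ℂ[X] := ∏ k, (X - C (βh k)) with hRdef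
  have hPm : P.Monic := monic_prod_of_monic _ _ fun k _ => monic_X_sub_C _
  have hRm : R.Monic := monic_prod_of_monic _ _ fun k _ => monic_X_sub_C _
  have hPd : P.degree = ((N + 1 : ℕ) : WithBot ℕ) := by
    rw [hPdef, degree_prod]
    simp [degree_X_sub_C]
  have hRd : R.degree = ((N + 1 : ℕ) : WithBot ℕ) := by
    rw [hRdef, degree_prod]
    simp [degree_X_sub_C]
  have hcard : (Finset.univ : Finset (Fin (N + 1))).card = N + 1 := by simp
  have hdeg : (P - R).degree < ((Finset.univ : Finset (Fin (N + 1))).card : WithBot ℕ) := by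
    rw [hcard]
    have := Polynomial.degree_sub_lt (hPd.trans hRd.symm) hPm.ne_zero
      (by rw [hPm.leadingCoeff, hRm.leadingCoeff])
    rwa [hPd] at this
  have hinj : Set.InjOn βh (Finset.univ : Finset (Fin (N + 1))) :=
    fun a _ b _ h => hβh_inj h
  have hkey := Lagrange.eq_interpolate (s := Finset.univ) (v := βh) hinj hdeg
  have h0 := congrArg (Polynomial.eval 0) hkey
  rw [Lagrange.interpolate_apply] at h0
  simp only [Polynomial.eval_sub, Polynomial.eval_finset_sum, Polynomial.eval_mul,
    Polynomial.eval_C] at h0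
  -- compute the pieces
  have hP0 : P.eval 0 = (-1 : ℂ) ^ (N + 1) * ∏ k, β k := by
    rw [hPdef, eval_prod]
    simp only [eval_sub, eval_X, eval_C, zero_sub]
    rw [prod_neg_aux, hcard]
  have hR0 : R.eval 0 = (-1 : ℂ) ^ (N + 1) * ∏ k, βh k := by
    rw [hRdef, eval_prod]
    simp only [eval_sub, eval_X, eval_C, zero_sub]
    rw [prod_neg_aux, hcard]
  have hPv : ∀ i, P.eval (βh i) = ∏ k, (βh i - β k) := by
    intro i; rw [hPdef, eval_prod]; simp
  have hRv : ∀ i, R.eval (βh i) = 0 := by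
    intro i
    rw [hRdef, eval_prod]
    exact Finset.prod_eq_zero (Finset.mem_univ i) (by simp)
  have hbasis : ∀ i, (Lagrange.basis Finset.univ βh i).eval 0
      = (-1 : ℂ) ^ N * ∏ j ∈ Finset.univ.erase i, βh j / (βh i - βh j) := by
    intro i
    rw [Lagrange.basis, eval_prod]
    have hc : ∀ j ∈ Finset.univ.erase i,
        (Lagrange.basisDivisor (βh i) (βh j)).eval 0 = -(βh j / (βh i - βh j)) := by
      intro j _
      simp only [Lagrange.basisDivisor, eval_mul, eval_sub, eval_C, eval_X, zero_sub,
        div_eq_inv_mul]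
      ring
    rw [Finset.prod_congr rfl hc, prod_neg_aux, Finset.card_erase_of_mem (Finset.mem_univ i),
      hcard, Nat.add_sub_cancel]
  rw [hP0, hR0] at h0
  simp only [hPv, hRv, hbasis, sub_zero] at h0
  -- h0 : (-1)^(N+1) * ∏ β - (-1)^(N+1) * ∏ βh
  --    = ∑ i, (∏ k, (βh i - β k)) * ((-1)^N * ∏ j ∈ erase i, βh j / (βh i - βh j))
  have h1 : (-1 : ℂ) ^ N * ∑ i, (∏ k, (βh i - β k)) *
      ∏ j ∈ Finset.univ.erase i, βh j / (βh i - βh j)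
      = (-1 : ℂ) ^ (N + 1) * ((∏ k, β k) - ∏ k, βh k) := by
    calc (-1 : ℂ) ^ N * ∑ i, (∏ k, (βh i - β k)) *
          ∏ j ∈ Finset.univ.erase i, βh j / (βh i - βh j)
        = ∑ i, (∏ k, (βh i - β k)) *
            ((-1 : ℂ) ^ N * ∏ j ∈ Finset.univ.erase i, βh j / (βh i - βh j)) := by
          rw [Finset.mul_sum]; exact Finset.sum_congr rfl fun i _ => by ring
      _ = (-1 : ℂ) ^ (N + 1) * (∏ k, β k) - (-1 : ℂ) ^ (N + 1) * ∏ k, βh k := h0.symm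
      _ = (-1 : ℂ) ^ (N + 1) * ((∏ k, β k) - ∏ k, βh k) := by ring
  have hEven : ((-1 : ℂ) ^ N) * ((-1 : ℂ) ^ N) = 1 := by
    rw [← pow_add]; exact Even.neg_one_pow ⟨N, rfl⟩
  have hOdd : ((-1 : ℂ) ^ N) * ((-1 : ℂ) ^ (N + 1)) = -1 := by
    rw [← pow_add]; exact Odd.neg_one_pow ⟨N, by ring⟩
  have hsum : ∑ i, (∏ k, (βh i - β k)) * ∏ j ∈ Finset.univ.erase i, βh j / (βh i - βh j)
      = (∏ k, βh k) - ∏ k, β k := by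
    calc ∑ i, (∏ k, (βh i - β k)) * ∏ j ∈ Finset.univ.erase i, βh j / (βh i - βh j)
        = ((-1 : ℂ) ^ N * (-1 : ℂ) ^ N) *
            ∑ i, (∏ k, (βh i - β k)) * ∏ j ∈ Finset.univ.erase i, βh j / (βh i - βh j) := by
          rw [hEven, one_mul]
      _ = (-1 : ℂ) ^ N * ((-1 : ℂ) ^ N *
            ∑ i, (∏ k, (βh i - β k)) * ∏ j ∈ Finset.univ.erase i, βh j / (βh i - βh j)) := by
          ring
      _ = (-1 : ℂ) ^ N * ((-1 : ℂ) ^ (N + 1) * ((∏ k, β k) - ∏ k, βh k)) := by rw [h1]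
      _ = ((-1 : ℂ) ^ N * (-1 : ℂ) ^ (N + 1)) * ((∏ k, β k) - ∏ k, βh k) := by ring
      _ = (∏ k, βh k) - ∏ k, β k := by rw [hOdd]; ring
  calc ∑ i, (∏ k, (βh i - β k) / β k) * ∏ k ∈ Finset.univ.erase i, βh k / (βh i - βh k)
      = ∑ i, ((∏ k, (βh i - β k)) * ∏ j ∈ Finset.univ.erase i, βh j / (βh i - βh j)) /
          ∏ k, β k := by
        refine Finset.sum_congr rfl fun i _ => ?_
        rw [Finset.prod_div_distrib, div_mul_eq_mul_div]
    _ = (∑ i, (∏ k, (βh i - β k)) * ∏ j ∈ Finset.univ.erase i, βh j / (βh i - βh j)) /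
          ∏ k, β k := (Finset.sum_div _ _ _).symm
    _ = ((∏ k, βh k) - ∏ k, β k) / ∏ k, β k := by rw [hsum]
    _ = (∏ k, βh k) / (∏ k, β k) - 1 := by rw [sub_div, div_self hβprod]
end
end
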